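/- arXiv:2601.02489 — 3 statements merged into one kernel-verified Lean document; each statement's English description precedes it below -/
import Mathlib

section
/- Let Y be a compact abelian topological group and f : Y → ℝ a continuous polynomial function, i.e., there exists n ≥ 0 such that the (n+1)-fold finite difference Δ_h^{n+1} f vanishes for all h ∈ Y. Then f is constant. -/
/-- The finite difference operator `(Δ_h f)(y) = f (y + h) - f y`. -/
def fdiff {Y : Type*} [Add Y] (h : Y) (f : Y → ℝ) : Y → ℝ :=
  fun y => f (y + h) - f y

/-- Finite difference for sequences. -/
def dseq (a : ℕ → ℝ) : ℕ → ℝ := fun k => a (k + 1) - a k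

lemma dseq_key (n : ℕ) : ∀ (a : ℕ → ℝ) (C : ℝ), (∀ k, |a k| ≤ C) →
    dseq^[n + 1] a = 0 → ∀ k, dseq a k = 0 := by
  induction n with
  | zero =>
    intro a C _ h k
    simpa using congrFun h k
  | succ n ih =>
    intro a C hb h
    have hb2 : ∀ k, |dseq a k| ≤ C + C := fun k =>
      (abs_sub _ _).trans (add_le_add (hb _) (hb _))
    have h2 : dseq^[n + 1] (dseq a) = 0 := by
      rw [← Function.iterate_succ_apply]; exact h
    have hconst : ∀ k, dseq (dseq a) k = 0 := ih (dseq a) (C + C) hb2 h2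
    -- dseq a is constant
    have hc : ∀ k, dseq a k = dseq a 0 := by
      intro k
      induction k with
      | zero => rfl
      | succ k ihk =>
        have := hconst k
        simp only [dseq] at this ihk ⊢
        linarith
    set c := dseq a 0 with hcdef
    have ha : ∀ k : ℕ, a k = a 0 + k * c := by
      intro k
      induction k with
      | zero => simp
      | succ k ihk =>
        have := hc k
        simp only [dseq] at this
        push_cast
        linarith
    have hc0 : c = 0 := by
      by_contra hne
      obtain ⟨k, hk⟩ := exists_nat_gt ((C + |a 0|) / |c|)
      have hcpos : (0:ℝ) < |c| := abs_pos.mpr hne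
      have hk' : C + |a 0| < k * |c| := (div_lt_iff₀ hcpos).mp hk
      have h1 : |a k| ≤ C := hb k
      have h2 : |(k : ℝ) * c| - |a 0| ≤ |a 0 + k * c| := by
        have := abs_sub_abs_le_abs_sub ((k:ℝ) * c) (-(a 0))
        simp only [abs_neg, sub_neg_eq_add] at this
        calc |(k : ℝ) * c| - |a 0| ≤ |(k:ℝ) * c + a 0| := this
          _ = |a 0 + k * c| := by ring_nf
      rw [← ha k] at h2
      rw [abs_mul, Nat.abs_cast] at h2
      linarith
    intro k
    rw [hc k, hc0]

lemma dseq_fdiff {Y : Type*} [AddCommGroup Y] (h y : Y) (m : ℕ) :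
    ∀ f : Y → ℝ, dseq^[m] (fun k => f (y + k • h)) = fun k => ((fdiff h)^[m] f) (y + k • h) := by
  induction m with
  | zero => intro f; rfl
  | succ m ih =>
    intro f
    rw [Function.iterate_succ_apply, Function.iterate_succ_apply]
    have : dseq (fun k => f (y + k • h)) = fun k => (fdiff h f) (y + k • h) := by
      funext k
      simp only [dseq, fdiff, succ_nsmul, add_assoc]
    rw [this]
    exact ih (fdiff h f)

/-- A continuous polynomial on a compact abelian topological group is constant. -/
theorem stmt_5 {Y : Type*} [AddCommGroup Y] [TopologicalSpace Y] [IsTopologicalAddGroup Y]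
    [CompactSpace Y] (f : Y → ℝ) (hf : Continuous f) (n : ℕ)
    (hpoly : ∀ h : Y, (fdiff h)^[n + 1] f = 0) :
    ∀ y₁ y₂ : Y, f y₁ = f y₂ := by
  obtain ⟨C, hC⟩ := isCompact_univ.exists_bound_of_continuousOn hf.continuousOn
  have key : ∀ (y h : Y), f (y + h) = f y := by
    intro y h
    set a : ℕ → ℝ := fun k => f (y + k • h) with hadef
    have hbd : ∀ k, |a k| ≤ C := fun k => by
      simpa using hC (y + k • h) trivial
    have hzero : dseq^[n + 1] a = 0 := by
      rw [hadef, dseq_fdiff, hpoly]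
      rfl
    have := dseq_key n a C hbd hzero 0
    simp only [dseq, hadef, zero_smul, add_zero, one_smul, zero_add] at this
    linarith
  intro y₁ y₂
  have := key y₁ (y₂ - y₁)
  rw [add_sub_cancel] at this
  exact this.symm
end

section
/- Let X be a finite cyclic group of odd order with dual Y, and α an automorphism of X with adjoint α̃. Suppose μ₁, μ₂ are distributions on X whose characteristic functions satisfy the Heyde equation μ̂₁(u+v) μ̂₂(u+α̃v) = μ̂₁(u−v) μ̂₂(u−α̃v) for all u,v ∈ Y, and {y ∈ Y : |μ̂₁(y)| = |μ̂₂(y)| = 1} = {0}. Then μ₁ = μ₂ = μ and the uniform distribution on the subgroup (I+α)(X) is a factor of μ. -/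
open MeasureTheory
open scoped ENNReal

namespace Stmt18

open Complex Finset

set_option linter.unusedSectionVars false

variable {n : ℕ} [NeZero n] [MeasurableSpace (ZMod n)] [DiscreteMeasurableSpace (ZMod n)]

/-- The pairing character `x ↦ e(xy/n)`. -/
noncomputable def E (y : ZMod n) : AddChar (ZMod n) Circle :=
  (ZMod.toCircle).mulShift y

lemma E_apply (y x : ZMod n) : E y x = ZMod.toCircle (y * x) := AddChar.mulShift_apply

lemma E_eq_one_iff (y : ZMod n) : E y = 1 ↔ y = 0 := by
  constructor
  · intro h
    have h1 : E y 1 = 1 := by rw [h]; rfl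
    rw [E_apply, mul_one] at h1
    have h0 : ZMod.toCircle (0 : ZMod n) = 1 := AddChar.map_zero_eq_one _
    exact ZMod.injective_toCircle (h1.trans h0.symm)
  · rintro rfl
    ext x
    simp [E_apply]

lemma E_mul_E (u v x : ZMod n) : (E u x : Circle) * E v x = E (u + v) x := by
  rw [E_apply, E_apply, E_apply, add_mul, AddChar.map_add_eq_mul]

lemma E_inv (v x : ZMod n) : (E v x : Circle)⁻¹ = E (-v) x := by
  rw [E_apply, E_apply, neg_mul, AddChar.map_neg_eq_inv]

lemma E_comm (y x : ZMod n) : E y x = E x y := by rw [E_apply, E_apply, mul_comm]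

/-- weights of a measure -/
noncomputable def w (μ : Measure (ZMod n)) (x : ZMod n) : ℝ := (μ {x}).toReal

lemma w_nonneg (μ : Measure (ZMod n)) (x : ZMod n) : 0 ≤ w μ x := ENNReal.toReal_nonneg

/-- characteristic function -/
noncomputable def F (μ : Measure (ZMod n)) (y : ZMod n) : ℂ := ∫ x, (E y x : ℂ) ∂μ

variable (μ : Measure (ZMod n)) [IsProbabilityMeasure μ]

lemma F_eq_sum (y : ZMod n) : F μ y = ∑ x, (w μ x : ℂ) * (E y x : ℂ) := by
  rw [F, integral_fintype (Integrable.of_finite)]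
  refine Finset.sum_congr rfl fun x _ => ?_
  rw [w, real_smul, measureReal_def]

lemma sum_w : ∑ x, w μ x = 1 := by
  have h : ∫ (_ : ZMod n), (1 : ℝ) ∂μ = ∑ x, (μ {x}).toReal • (1 : ℝ) :=
    integral_fintype (Integrable.of_finite)
  simp only [integral_const, measureReal_def, measure_univ, ENNReal.toReal_one, smul_eq_mul, one_smul, mul_one] at h
  simpa [w] using h.symm

lemma abs_E (y x : ZMod n) : ‖(E y x : ℂ)‖ = 1 := Circle.norm_coe _

lemma F_zero : F μ 0 = 1 := by
  rw [F_eq_sum]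
  have : ∀ x : ZMod n, (w μ x : ℂ) * (E (0 : ZMod n) x : ℂ) = (w μ x : ℂ) := by
    intro x
    simp [E_apply]
  rw [Finset.sum_congr rfl fun x _ => this x]
  rw [← Complex.ofReal_sum, sum_w]
  norm_num

lemma abs_F_le_one (y : ZMod n) : ‖F μ y‖ ≤ 1 := by
  rw [F_eq_sum]
  calc ‖∑ x, (w μ x : ℂ) * (E y x : ℂ)‖
      ≤ ∑ x, ‖(w μ x : ℂ) * (E y x : ℂ)‖ := norm_sum_le _ _
    _ = ∑ x, w μ x := by
        refine Finset.sum_congr rfl fun x _ => ?_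
        rw [norm_mul, abs_E, mul_one, Complex.norm_real, Real.norm_eq_abs, _root_.abs_of_nonneg (w_nonneg μ x)]
    _ = 1 := sum_w μ


lemma coe_circle_pow (z : Circle) (k : ℕ) : ((z ^ k : Circle) : ℂ) = (z : ℂ) ^ k :=
  map_pow Circle.coeHom z k

lemma E_mul_val (c y x : ZMod n) : (E (c * y) x : Circle) = (E y x) ^ c.val := by
  rw [E_apply, E_apply, ← AddChar.map_nsmul_eq_pow]
  congr 1
  rw [nsmul_eq_mul]
  have hc : ((c.val : ℕ) : ZMod n) = c := ZMod.natCast_rightInverse c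
  rw [hc]; ring

/-- If a complex number has modulus one and real part one, it is one. -/
lemma eq_one_of_re_eq_one {z : ℂ} (h1 : ‖z‖ = 1) (h2 : z.re = 1) : z = 1 := by
  have hsq := Complex.sq_norm z
  rw [h1, Complex.normSq_apply] at hsq
  have him : z.im = 0 := by nlinarith
  exact Complex.ext (by simp [h2]) (by simp [him])

lemma conj_mul_self_eq_one {c : ℂ} (h : ‖c‖ = 1) : (starRingEnd ℂ) c * c = 1 := by
  rw [mul_comm, Complex.mul_conj, ← Complex.sq_norm, h]
  norm_num

/-- Rigidity: all support points give the same character value. -/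
lemma support_const {y : ZMod n} (h : ‖F μ y‖ = 1) :
    ∀ x : ZMod n, w μ x ≠ 0 → (E y x : ℂ) = F μ y := by
  set c := F μ y with hc
  have habs1 : ∀ x : ZMod n, ‖(starRingEnd ℂ) c * (E y x : ℂ)‖ = 1 := by
    intro x
    rw [norm_mul, Complex.norm_conj, h, abs_E, one_mul]
  have e1 : ∑ x, w μ x * ((starRingEnd ℂ) c * (E y x : ℂ)).re = 1 := by
    have e2 : (starRingEnd ℂ) c * c = ∑ x, ((w μ x : ℂ) * ((starRingEnd ℂ) c * (E y x : ℂ))) := by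
      rw [hc, F_eq_sum, Finset.mul_sum]
      exact Finset.sum_congr rfl fun x _ => by ring
    have e3 := congrArg Complex.re e2
    rw [conj_mul_self_eq_one h] at e3
    rw [Complex.re_sum, Complex.one_re] at e3
    rw [e3]
    exact Finset.sum_congr rfl fun x _ => (Complex.re_ofReal_mul _ _).symm
  have hsum : ∑ x, w μ x * (1 - ((starRingEnd ℂ) c * (E y x : ℂ)).re) = 0 := by
    have : ∑ x, w μ x * (1 - ((starRingEnd ℂ) c * (E y x : ℂ)).re)
        = (∑ x, w μ x) - ∑ x, w μ x * ((starRingEnd ℂ) c * (E y x : ℂ)).re := by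
      rw [← Finset.sum_sub_distrib]
      exact Finset.sum_congr rfl fun x _ => by ring
    rw [this, sum_w, e1, sub_self]
  have hterm : ∀ x ∈ Finset.univ, (0:ℝ) ≤ w μ x * (1 - ((starRingEnd ℂ) c * (E y x : ℂ)).re) := by
    intro x _
    have hre : ((starRingEnd ℂ) c * (E y x : ℂ)).re ≤ 1 := by
      calc ((starRingEnd ℂ) c * (E y x : ℂ)).re ≤ ‖_‖ := Complex.re_le_norm _
        _ = 1 := habs1 x
    have := w_nonneg μ x
    nlinarith
  have hzero := (Finset.sum_eq_zero_iff_of_nonneg hterm).mp hsum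
  intro x hx
  have hx0 := hzero x (Finset.mem_univ x)
  have hre1 : ((starRingEnd ℂ) c * (E y x : ℂ)).re = 1 := by
    rcases mul_eq_zero.mp hx0 with h' | h'
    · exact absurd h' hx
    · linarith
  have : (starRingEnd ℂ) c * (E y x : ℂ) = 1 := eq_one_of_re_eq_one (habs1 x) hre1
  calc (E y x : ℂ) = (c * (starRingEnd ℂ) c) * (E y x : ℂ) := by
        rw [mul_comm c, conj_mul_self_eq_one h, one_mul]
    _ = c * ((starRingEnd ℂ) c * (E y x : ℂ)) := by ring
    _ = c := by rw [this, mul_one]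

lemma abs_F_mul {y : ZMod n} (h : ‖F μ y‖ = 1) (c : ZMod n) :
    ‖F μ (c * y)‖ = 1 := by
  have hconst := support_const μ h
  have : F μ (c * y) = (F μ y) ^ c.val := by
    rw [F_eq_sum]
    have : ∀ x : ZMod n, (w μ x : ℂ) * (E (c * y) x : ℂ) = (w μ x : ℂ) * (F μ y) ^ c.val := by
      intro x
      by_cases hx : w μ x = 0
      · rw [hx]; simp
      · rw [E_mul_val, coe_circle_pow, hconst x hx]
    rw [Finset.sum_congr rfl fun x _ => this x, ← Finset.sum_mul, ← Complex.ofReal_sum, sum_w]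
    norm_num
  rw [this, norm_pow, h, one_pow]

lemma abs_F_neg (y : ZMod n) : ‖F μ (-y)‖ = ‖F μ y‖ := by
  have : F μ (-y) = (starRingEnd ℂ) (F μ y) := by
    rw [F_eq_sum, F_eq_sum, map_sum]
    refine Finset.sum_congr rfl fun x _ => ?_
    rw [map_mul, Complex.conj_ofReal, ← Circle.coe_inv_eq_conj, E_inv]
  rw [this, Complex.norm_conj]


/-- In a finite commutative ring, multiplication-injective elements are units. -/
lemma isUnit_of_mul_injective {x : ZMod n} (h : ∀ v, x * v = 0 → v = 0) : IsUnit x := by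
  have hinj : Function.Injective (fun v : ZMod n => x * v) := by
    intro v1 v2 h12
    have : x * (v1 - v2) = 0 := by
      simp only at h12
      rw [mul_sub, h12, sub_self]
    have := h _ this
    linear_combination this
  have hsurj := Finite.surjective_of_injective hinj
  obtain ⟨r, hr⟩ := hsurj 1
  exact IsUnit.of_mul_eq_one r hr

/-- the cycling argument -/
lemma cycle_eq {e : ZMod n} (he : IsUnit e) (h : ZMod n → ℝ)
    (mono : ∀ v, h v ≤ h (e * v)) : ∀ v, h (e * v) = h v := by
  obtain ⟨u, hu⟩ := he
  have key : ∀ (k : ℕ) (v : ZMod n), h v ≤ h ((u : ZMod n) ^ k * v) := by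
    intro k
    induction k with
    | zero => intro v; simp
    | succ k ih =>
      intro v
      calc h v ≤ h ((u : ZMod n) ^ k * v) := ih v
        _ ≤ h (e * ((u : ZMod n) ^ k * v)) := mono _
        _ = h ((u : ZMod n) ^ (k + 1) * v) := by rw [← hu, ← mul_assoc, ← pow_succ']

  intro v
  refine le_antisymm ?_ (mono v)
  have h1 := key (orderOf u - 1) (e * v)
  have horder : (u : ZMod n) ^ (orderOf u - 1) * (e * v) = v := by
    rw [← hu, ← mul_assoc, ← pow_succ]
    have hpos : 0 < orderOf u := orderOf_pos u
    rw [Nat.sub_add_cancel hpos]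
    have : (u : ZMod n) ^ orderOf u = ((u ^ orderOf u : (ZMod n)ˣ) : ZMod n) := by
      rw [Units.val_pow_eq_pow_val]
    rw [this, pow_orderOf_eq_one u, Units.val_one, one_mul]
  rw [horder] at h1
  exact h1

/-- Orthogonality: sum of a nontrivial character over the group vanishes. -/
lemma sum_E_eq_zero {z : ZMod n} (hz : z ≠ 0) : ∑ y : ZMod n, (E z y : ℂ) = 0 := by
  have : (Circle.coeHom.compAddChar (E z) : AddChar (ZMod n) ℂ) ≠ 1 := by
    intro hcontra
    apply hz
    rw [← E_eq_one_iff]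
    ext x
    have h2 : Circle.coeHom.compAddChar (E z) x = (1 : AddChar (ZMod n) ℂ) x := by
      rw [hcontra]
    simp only [MonoidHom.coe_compAddChar, Function.comp_apply, AddChar.one_apply] at h2
    have h3 : (E z x : Circle) = 1 := Circle.ext (h2.trans Circle.coe_one.symm)
    rw [h3, AddChar.one_apply]
  have := AddChar.sum_eq_zero_of_ne_one this
  exact this

lemma sum_E_eq_ite (z : ZMod n) :
    ∑ y : ZMod n, (E z y : ℂ) = if z = 0 then (n : ℂ) else 0 := by
  by_cases hz : z = 0
  · simp only [hz, if_true]
    have : ∀ y : ZMod n, (E (0 : ZMod n) y : ℂ) = 1 := by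
      intro y; rw [E_apply, zero_mul]
      rw [AddChar.map_zero_eq_one (ZMod.toCircle (N := n))]
      exact Circle.coe_one
    rw [Finset.sum_congr rfl fun y _ => this y]
    simp [ZMod.card]
  · simp only [hz, if_false]
    exact sum_E_eq_zero hz

/-- Fourier inversion identity. -/
lemma key_sum (x₀ : ZMod n) :
    ∑ y : ZMod n, (starRingEnd ℂ) (E y x₀ : ℂ) * F μ y = (n : ℂ) * (w μ x₀ : ℂ) := by
  have step : ∀ y : ZMod n, (starRingEnd ℂ) (E y x₀ : ℂ) * F μ y
      = ∑ x : ZMod n, (w μ x : ℂ) * (E y (x - x₀) : ℂ) := by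
    intro y
    rw [F_eq_sum, Finset.mul_sum]
    refine Finset.sum_congr rfl fun x _ => ?_
    have h1 : (starRingEnd ℂ) (E y x₀ : ℂ) = ((E y (-x₀) : Circle) : ℂ) := by
      rw [AddChar.map_neg_eq_inv, Circle.coe_inv_eq_conj]
    have h2 : ((E y (-x₀) : Circle) : ℂ) * ((E y x : Circle) : ℂ)
        = ((E y (x - x₀) : Circle) : ℂ) := by
      norm_cast
      have hadd := AddChar.map_add_eq_mul (E y) (-x₀) x
      rw [← hadd]
      rw [neg_add_eq_sub]
    calc (starRingEnd ℂ) (E y x₀ : ℂ) * ((w μ x : ℂ) * (E y x : ℂ))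
        = (w μ x : ℂ) * (((E y (-x₀) : Circle) : ℂ) * ((E y x : Circle) : ℂ)) := by
          rw [h1]; ring
      _ = (w μ x : ℂ) * (E y (x - x₀) : ℂ) := by rw [h2]
  rw [Finset.sum_congr rfl fun y _ => step y, Finset.sum_comm]
  have inner : ∀ x : ZMod n, ∑ y : ZMod n, (w μ x : ℂ) * (E y (x - x₀) : ℂ)
      = (w μ x : ℂ) * (if x - x₀ = 0 then (n : ℂ) else 0) := by
    intro x
    rw [← Finset.mul_sum]
    congr 1
    rw [← sum_E_eq_ite]
    exact Finset.sum_congr rfl fun y _ => by rw [E_comm]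
  rw [Finset.sum_congr rfl fun x _ => inner x]
  rw [Finset.sum_eq_single x₀]
  · simp [mul_comm]
  · intro b _ hb
    have : ¬ (b - x₀ = 0) := fun hcon => hb (by linear_combination hcon)
    simp [this]
  · intro hcon
    exact absurd (Finset.mem_univ x₀) hcon


lemma eq_zero_of_unit_mul {x v : ZMod n} (h : IsUnit x) (hv : x * v = 0) : v = 0 := by
  obtain ⟨u, rfl⟩ := h
  calc v = ((u⁻¹ : (ZMod n)ˣ) : ZMod n) * ((u : ZMod n) * v) := by
        rw [← mul_assoc]
        norm_cast
        rw [inv_mul_cancel u, Units.val_one, one_mul]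
    _ = 0 := by rw [hv, mul_zero]

/-- shift invariance from spectral support -/
lemma shift_invariant (a : ZMod n) (hsupp : ∀ y : ZMod n, (1 + a) * y ≠ 0 → F μ y = 0)
    {s : ZMod n} (hs : ∃ z : ZMod n, z + a * z = s) (x : ZMod n) : μ {x + s} = μ {x} := by
  obtain ⟨z, hz⟩ := hs
  have hEs : ∀ y : ZMod n, (1 + a) * y = 0 → (E y s : ℂ) = 1 := by
    intro y hy
    rw [E_apply]
    have hys : y * s = ((1 + a) * y) * z := by rw [← hz]; ring
    rw [hys, hy, zero_mul, AddChar.map_zero_eq_one]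
    exact Circle.coe_one
  have keyeq : ∑ y : ZMod n, (starRingEnd ℂ) (E y (x + s) : ℂ) * F μ y
      = ∑ y : ZMod n, (starRingEnd ℂ) (E y x : ℂ) * F μ y := by
    refine Finset.sum_congr rfl fun y _ => ?_
    by_cases hy : (1 + a) * y = 0
    · have hmul : (E y (x + s) : ℂ) = (E y x : ℂ) * (E y s : ℂ) := by
        norm_cast
        rw [AddChar.map_add_eq_mul (E y) x s]
      rw [hmul, hEs y hy, mul_one]
    · rw [hsupp y hy, mul_zero, mul_zero]
  rw [key_sum, key_sum] at keyeq
  have hn : (n : ℂ) ≠ 0 := Nat.cast_ne_zero.mpr (NeZero.ne n)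
  have hw : (w μ (x + s) : ℂ) = (w μ x : ℂ) := mul_left_cancel₀ hn keyeq
  have hw' : w μ (x + s) = w μ x := by exact_mod_cast hw
  exact (ENNReal.toReal_eq_toReal_iff' (measure_ne_top μ _) (measure_ne_top μ _)).mp hw'

/-- convolution on singletons, on a finite discrete group -/
lemma conv_singleton (ν μ' : Measure (ZMod n)) [SFinite ν] [SFinite μ'] (x : ZMod n) :
    (ν.conv μ') {x} = ∑ s : ZMod n, ν {s} * μ' {x - s} := by
  rw [Measure.conv, Measure.map_apply (measurable_of_countable _) (MeasurableSet.singleton x)]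
  have hpre : ((fun p : ZMod n × ZMod n => p.1 + p.2) ⁻¹' {x})
      = ⋃ s : ZMod n, ({s} : Set (ZMod n)) ×ˢ ({x - s} : Set (ZMod n)) := by
    ext p
    simp only [Set.mem_preimage, Set.mem_singleton_iff, Set.mem_iUnion, Set.mem_prod]
    constructor
    · intro h
      exact ⟨p.1, rfl, by rw [← h]; ring⟩
    · rintro ⟨q, h1, h2⟩
      rw [h1, h2]; ring
  rw [hpre, measure_iUnion ?_ ?_]
  · rw [tsum_fintype]
    exact Finset.sum_congr rfl fun q _ => Measure.prod_prod _ _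
  · intro i j hij
    simp only [Function.onFun]
    apply Set.disjoint_left.mpr
    rintro ⟨p1, p2⟩ hp hq
    simp only [Set.mem_prod, Set.mem_singleton_iff] at hp hq
    exact hij (hp.1.symm.trans hq.1)
  · intro q
    exact (measurableSet_singleton q).prod (measurableSet_singleton _)

end Stmt18


open Stmt18 in
/-- Heyde-type theorem for a finite cyclic group of odd order: if the characteristic
functions of `μ₁, μ₂` satisfy the Heyde equation and have modulus `1` simultaneously only at
the trivial character, then `μ₁ = μ₂ = μ` and the uniform distribution on `(I + α)(X)` is a
factor of `μ`. -/
theorem stmt_18 (n : ℕ) (hn : Odd n) [NeZero n]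
    [MeasurableSpace (ZMod n)] [DiscreteMeasurableSpace (ZMod n)]
    (α : ZMod n ≃+ ZMod n)
    (μ₁ μ₂ : Measure (ZMod n)) [IsProbabilityMeasure μ₁] [IsProbabilityMeasure μ₂]
    (heyde : ∀ u v : AddChar (ZMod n) Circle,
      (∫ x, ((u x * v x : Circle) : ℂ) ∂μ₁) *
        (∫ x, ((u x * v (α x) : Circle) : ℂ) ∂μ₂) =
      (∫ x, ((u x * (v x)⁻¹ : Circle) : ℂ) ∂μ₁) *
        (∫ x, ((u x * (v (α x))⁻¹ : Circle) : ℂ) ∂μ₂))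
    (htriv : ∀ y : AddChar (ZMod n) Circle,
      ‖∫ x, (y x : ℂ) ∂μ₁‖ = 1 → ‖∫ x, (y x : ℂ) ∂μ₂‖ = 1 → y = 1)
    (S : AddSubgroup (ZMod n)) (hS : ∀ x : ZMod n, x ∈ S ↔ ∃ z : ZMod n, z + α z = x) :
    μ₁ = μ₂ ∧
      μ₁ = (((Nat.card S : ℝ≥0∞))⁻¹ •
        Measure.count.restrict (S : Set (ZMod n))).conv μ₁ := by
  classical
  set a : ZMod n := α 1 with ha_def
  have hα : ∀ x : ZMod n, α x = x * a := by
    intro x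
    have hval : ((x.val : ℕ) : ZMod n) = x := ZMod.natCast_rightInverse x
    have hx : x = x.val • (1 : ZMod n) := by rw [nsmul_eq_mul, mul_one, hval]
    conv_lhs => rw [hx]
    rw [map_nsmul, nsmul_eq_mul, hval, ← ha_def]
  have ha : IsUnit a := by
    obtain ⟨b, hb⟩ := α.surjective 1
    refine IsUnit.of_mul_eq_one b ?_
    rw [mul_comm, ← hα b, hb]
  have h2u : IsUnit (2 : ZMod n) := by
    have h22 : ((2 : ℕ) : ZMod n) = (2 : ZMod n) := by norm_cast
    rw [← h22, ZMod.isUnit_iff_coprime]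
    exact Nat.coprime_two_left.mpr hn
  -- the Heyde equation on frequencies
  have key : ∀ u v : ZMod n,
      F μ₁ (u + v) * F μ₂ (u + a * v) = F μ₁ (u - v) * F μ₂ (u - a * v) := by
    intro u v
    have h := heyde (E u) (E v)
    have eα : ∀ x : ZMod n, E v (α x) = E (a * v) x := by
      intro x
      rw [hα x, E_apply, E_apply]
      congr 1; ring
    have e1 : (fun x : ZMod n => ((E u x * E v x : Circle) : ℂ))
        = fun x => ((E (u + v) x : Circle) : ℂ) := by
      funext x; rw [E_mul_E]
    have e2 : (fun x : ZMod n => ((E u x * E v (α x) : Circle) : ℂ))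
        = fun x => ((E (u + a * v) x : Circle) : ℂ) := by
      funext x; rw [eα x, E_mul_E]
    have e3 : (fun x : ZMod n => ((E u x * (E v x)⁻¹ : Circle) : ℂ))
        = fun x => ((E (u - v) x : Circle) : ℂ) := by
      funext x; rw [E_inv, E_mul_E, ← sub_eq_add_neg]
    have e4 : (fun x : ZMod n => ((E u x * (E v (α x))⁻¹ : Circle) : ℂ))
        = fun x => ((E (u - a * v) x : Circle) : ℂ) := by
      funext x; rw [eα x, E_inv, E_mul_E, ← sub_eq_add_neg]
    have i1 := congrArg (integral μ₁) e1
    have i2 := congrArg (integral μ₂) e2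
    have i3 := congrArg (integral μ₁) e3
    have i4 := congrArg (integral μ₂) e4
    rw [i1, i2, i3, i4] at h
    exact h
  have htriv' : ∀ y : ZMod n,
      ‖F μ₁ y‖ = 1 → ‖F μ₂ y‖ = 1 → y = 0 := by
    intro y h1 h2
    have := htriv (E y) h1 h2
    exact (E_eq_one_iff y).mp this
  -- (1 - a) is a unit
  have hone : IsUnit (1 - a) := by
    apply isUnit_of_mul_injective
    intro v hv
    have hav : a * v = v := by linear_combination -hv
    have h := key v v
    rw [show v + v = 2 * v by ring, show v + a * v = 2 * v by linear_combination hav,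
      show v - v = (0 : ZMod n) by ring, show v - a * v = (0 : ZMod n) by linear_combination -hav,
      F_zero μ₁, F_zero μ₂, one_mul] at h
    have habs := congrArg norm h
    rw [norm_mul, norm_one] at habs
    have hle1 := abs_F_le_one μ₁ (2 * v)
    have hle2 := abs_F_le_one μ₂ (2 * v)
    have hge1 := norm_nonneg (F μ₁ (2 * v))
    have hge2 := norm_nonneg (F μ₂ (2 * v))
    have h1 : ‖F μ₁ (2 * v)‖ = 1 := by nlinarith
    have h2 : ‖F μ₂ (2 * v)‖ = 1 := by nlinarith
    exact eq_zero_of_unit_mul h2u (htriv' (2 * v) h1 h2)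
  obtain ⟨rr, hr⟩ : ∃ rr : ZMod n, (1 - a) * rr = 1 := by
    obtain ⟨u, hu⟩ := hone
    exact ⟨((u⁻¹ : (ZMod n)ˣ) : ZMod n), by rw [← hu]; norm_cast; rw [mul_inv_cancel u, Units.val_one]⟩
  have hrunit : IsUnit rr := IsUnit.of_mul_eq_one (1 - a) (by linear_combination hr)
  set β : ZMod n := (1 + a) * rr with hβ
  -- the two fundamental relations
  have relII : ∀ t : ZMod n, F μ₁ ((1 + β) * t) * F μ₂ (β * t) = F μ₂ t := by
    intro t
    have h := key (rr * t) (rr * t)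
    rw [show rr * t + rr * t = (1 + β) * t by rw [hβ]; linear_combination t * hr,
      show rr * t + a * (rr * t) = β * t by rw [hβ]; ring,
      show rr * t - rr * t = (0 : ZMod n) by ring,
      show rr * t - a * (rr * t) = t by linear_combination t * hr,
      F_zero μ₁, one_mul] at h
    exact h
  have relI : ∀ t : ZMod n, F μ₁ (β * t) * F μ₂ ((β - 1) * t) = F μ₁ (-t) := by
    intro t
    have h := key (a * (rr * t)) (rr * t)
    rw [show a * (rr * t) + rr * t = β * t by rw [hβ]; ring,
      show a * (rr * t) + a * (rr * t) = (β - 1) * t by rw [hβ]; linear_combination -t * hr,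
      show a * (rr * t) - rr * t = -t by linear_combination -t * hr,
      show a * (rr * t) - a * (rr * t) = (0 : ZMod n) by ring,
      F_zero μ₂, mul_one] at h
    exact h
  set P : ZMod n → ℝ := fun y => ‖F μ₁ y‖ with hPdef
  set Q : ZMod n → ℝ := fun y => ‖F μ₂ y‖ with hQdef
  have hIImod : ∀ t : ZMod n, P ((1 + β) * t) * Q (β * t) = Q t := by
    intro t
    simp only [hPdef, hQdef]
    rw [← norm_mul, relII t]
  have hImod : ∀ t : ZMod n, P (β * t) * Q ((β - 1) * t) = P t := by
    intro t
    simp only [hPdef, hQdef]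
    rw [← norm_mul, relI t, abs_F_neg]
  have hP0 : ∀ y, 0 ≤ P y := fun y => norm_nonneg _
  have hQ0 : ∀ y, 0 ≤ Q y := fun y => norm_nonneg _
  have hP1 : ∀ y, P y ≤ 1 := fun y => abs_F_le_one μ₁ y
  have hQ1 : ∀ y, Q y ≤ 1 := fun y => abs_F_le_one μ₂ y
  have hβm1 : IsUnit (β - 1) := by
    have hid : β - 1 = 2 * (a * rr) := by rw [hβ]; linear_combination hr
    rw [hid]
    exact h2u.mul (ha.mul hrunit)
  have hβp1 : IsUnit (1 + β) := by
    have hid : 1 + β = 2 * rr := by rw [hβ]; linear_combination -hr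
    rw [hid]
    exact h2u.mul hrunit
  set ee : ZMod n := (β - 1) * (1 + β) with heedef
  have he : IsUnit ee := hβm1.mul hβp1
  have s1 : ∀ v : ZMod n, Q v ≤ P ((1 + β) * v) := by
    intro v
    have h := hIImod v
    nlinarith [hP0 ((1 + β) * v), hQ0 (β * v), hQ1 (β * v)]
  have s2 : ∀ v : ZMod n, P v ≤ Q ((β - 1) * v) := by
    intro v
    have h := hImod v
    nlinarith [hQ0 ((β - 1) * v), hP0 (β * v), hP1 (β * v)]
  have hQmono : ∀ v, Q v ≤ Q (ee * v) := by
    intro v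
    calc Q v ≤ P ((1 + β) * v) := s1 v
      _ ≤ Q ((β - 1) * ((1 + β) * v)) := s2 _
      _ = Q (ee * v) := by rw [show (β - 1) * ((1 + β) * v) = ee * v by rw [heedef]; ring]
  have hPmono : ∀ v, P v ≤ P (ee * v) := by
    intro v
    calc P v ≤ Q ((β - 1) * v) := s2 v
      _ ≤ P ((1 + β) * ((β - 1) * v)) := s1 _
      _ = P (ee * v) := by rw [show (1 + β) * ((β - 1) * v) = ee * v by rw [heedef]; ring]
  have hQe : ∀ v, Q (ee * v) = Q v := cycle_eq he Q hQmono
  have hPe : ∀ v, P (ee * v) = P v := cycle_eq he P hPmono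
  have E1 : ∀ t : ZMod n, P ((1 + β) * t) = Q t := by
    intro t
    refine le_antisymm ?_ (s1 t)
    calc P ((1 + β) * t) ≤ Q ((β - 1) * ((1 + β) * t)) := s2 _
      _ = Q (ee * t) := by rw [show (β - 1) * ((1 + β) * t) = ee * t by rw [heedef]; ring]
      _ = Q t := hQe t
  have E2 : ∀ t : ZMod n, Q ((β - 1) * t) = P t := by
    intro t
    refine le_antisymm ?_ (s2 t)
    calc Q ((β - 1) * t) ≤ P ((1 + β) * ((β - 1) * t)) := s1 _
      _ = P (ee * t) := by rw [show (1 + β) * ((β - 1) * t) = ee * t by rw [heedef]; ring]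
      _ = P t := hPe t
  -- vanishing off the annihilator
  have hvanish : ∀ y : ZMod n, β * y ≠ 0 → F μ₁ y = 0 ∧ F μ₂ y = 0 := by
    intro y hy
    constructor
    · by_contra hf
      have hPy : P y ≠ 0 := fun h0 => hf (by simpa [hPdef] using norm_eq_zero.mp h0)
      have h1 : P (β * y) = 1 := by
        have h := hImod y
        rw [E2 y] at h
        exact mul_right_cancel₀ hPy (by rw [h, one_mul])
      have h2 : Q (β * y) = 1 := by
        rw [← E1 (β * y)]
        exact abs_F_mul μ₁ h1 (1 + β)
      exact hy (htriv' (β * y) h1 h2)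
    · by_contra hg
      have hQy : Q y ≠ 0 := fun h0 => hg (by simpa [hQdef] using norm_eq_zero.mp h0)
      have h2 : Q (β * y) = 1 := by
        have h := hIImod y
        rw [E1 y] at h
        exact mul_left_cancel₀ hQy (by rw [h, mul_one])
      have h1 : P (β * y) = 1 := by
        rw [← E2 (β * y)]
        exact abs_F_mul μ₂ h2 (β - 1)
      exact hy (htriv' (β * y) h1 h2)
  -- equality of characteristic functions
  have hfg : ∀ y : ZMod n, F μ₁ y = F μ₂ y := by
    intro y
    by_cases hy : β * y = 0
    · have h := relII y
      rw [hy, F_zero μ₂, mul_one] at h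
      rw [show (1 + β) * y = y by linear_combination hy] at h
      exact h
    · rw [(hvanish y hy).1, (hvanish y hy).2]
  have hn0 : (n : ℂ) ≠ 0 := Nat.cast_ne_zero.mpr (NeZero.ne n)
  have hμeq : μ₁ = μ₂ := by
    apply Measure.ext_of_singleton
    intro x
    have h1 := key_sum μ₁ x
    have h2 := key_sum μ₂ x
    rw [Finset.sum_congr rfl (fun y _ => by rw [hfg y])] at h1
    have h12 := h1.symm.trans h2
    have hw : (w μ₁ x : ℂ) = (w μ₂ x : ℂ) := mul_left_cancel₀ hn0 h12
    have hw' : w μ₁ x = w μ₂ x := by exact_mod_cast hw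
    exact (ENNReal.toReal_eq_toReal_iff' (measure_ne_top μ₁ _) (measure_ne_top μ₂ _)).mp hw'
  -- spectral support of μ₁
  have hsupp : ∀ y : ZMod n, (1 + a) * y ≠ 0 → F μ₁ y = 0 := by
    intro y hy
    refine (hvanish y fun hβy => hy ?_).1
    have hid : (1 + a) * y = (1 - a) * (β * y) := by rw [hβ]; linear_combination (-(1 + a) * y) * hr
    rw [hid, hβy, mul_zero]
  -- invariance of μ₁ under S
  have hinv : ∀ s ∈ S, ∀ x : ZMod n, μ₁ {x + s} = μ₁ {x} := by
    intro s hs x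
    obtain ⟨z, hz⟩ := (hS s).mp hs
    refine shift_invariant μ₁ a hsupp ⟨z, ?_⟩ x
    rw [← hz, hα z, mul_comm z a]
  refine ⟨hμeq, ?_⟩
  -- the convolution identity
  have hk0 : (Nat.card S : ℝ≥0∞) ≠ 0 := by
    haveI : Nonempty S := ⟨⟨0, S.zero_mem⟩⟩
    exact_mod_cast Nat.cast_ne_zero.mpr Nat.card_pos.ne'
  have hkt : (Nat.card S : ℝ≥0∞) ≠ ⊤ := ENNReal.natCast_ne_top _
  set ν : Measure (ZMod n) :=
    ((Nat.card S : ℝ≥0∞))⁻¹ • Measure.count.restrict (S : Set (ZMod n)) with hν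
  apply Measure.ext_of_singleton
  intro x
  rw [conv_singleton]
  have hνs : ∀ s : ZMod n, ν {s} = if s ∈ S then (Nat.card S : ℝ≥0∞)⁻¹ else 0 := by
    intro s
    rw [hν, Measure.smul_apply, smul_eq_mul,
      Measure.restrict_apply (measurableSet_singleton s)]
    by_cases hs : s ∈ S
    · rw [Set.inter_eq_self_of_subset_left (Set.singleton_subset_iff.mpr hs),
        Measure.count_singleton, mul_one, if_pos hs]
    · rw [show ({s} : Set (ZMod n)) ∩ (S : Set (ZMod n)) = ∅ by
        ext t; simp only [Set.mem_inter_iff, Set.mem_singleton_iff, Set.mem_empty_iff_false,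
          iff_false, not_and]
        rintro rfl; exact hs,
        measure_empty, mul_zero, if_neg hs]
  have hterm : ∀ s : ZMod n,
      ν {s} * μ₁ {x - s} = if s ∈ S then (Nat.card S : ℝ≥0∞)⁻¹ * μ₁ {x} else 0 := by
    intro s
    rw [hνs s]
    by_cases hs : s ∈ S
    · rw [if_pos hs, if_pos hs]
      congr 1
      have := hinv s hs (x - s)
      rw [show x - s + s = x by ring] at this
      exact this.symm
    · rw [if_neg hs, if_neg hs, zero_mul]
  rw [Finset.sum_congr rfl fun s _ => hterm s]
  rw [Finset.sum_ite, Finset.sum_const, Finset.sum_const_zero, add_zero]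
  have hcard : (Finset.univ.filter (fun s : ZMod n => s ∈ S)).card = Nat.card S := by
    rw [Nat.card_eq_fintype_card, Fintype.card_subtype]
  rw [hcard, nsmul_eq_mul, ← mul_assoc, ENNReal.mul_inv_cancel hk0 hkt, one_mul]
end

section
/- Let X be a torsion abelian group with cyclic p-components and no elements of order 2, with compact dual Y, and μ a probability distribution on X with {y ∈ Y : |μ̂(y)| = 1} = {0}. If the characteristic function μ̂ satisfies μ̂(u+v) μ̂(u+α̃v) = μ̂(u−v) μ̂(u−α̃v) for all u, v ∈ Y where α̃ is the adjoint of an automorphism α of X, then Ker(I − α̃) = {0}, and consequently I − α is an automorphism of X. -/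
open MeasureTheory

section Aux
variable {X : Type*} [AddCommGroup X]

lemma heyde_unique {p : ℕ} (hp : p.Prime) {d : X} {k m : ℕ}
    (h1 : p ^ k • d = 0) (h2 : m • d = 0) (hm : ¬ p ∣ m) : d = 0 := by
  have hd1 : addOrderOf d ∣ p ^ k := addOrderOf_dvd_of_nsmul_eq_zero h1
  have hd2 : addOrderOf d ∣ m := addOrderOf_dvd_of_nsmul_eq_zero h2
  obtain ⟨j, hj, hje⟩ := (Nat.dvd_prime_pow hp).mp hd1
  rcases Nat.eq_zero_or_pos j with rfl | hjpos
  · rw [pow_zero] at hje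
    exact AddMonoid.addOrderOf_eq_one_iff.mp hje
  · exact absurd (dvd_trans (dvd_trans (dvd_pow_self p hjpos.ne') hje.symm.dvd) hd2) hm

lemma heyde_decomp (htor : ∀ x : X, IsOfFinAddOrder x) (p : ℕ) (hp : p.Prime) (z : X) :
    ∃ a m, (∃ k : ℕ, p ^ k • a = 0) ∧ ¬ p ∣ m ∧ m ∣ addOrderOf z ∧ m • (z - a) = 0 := by
  set n := addOrderOf z with hn
  have hn0 : n ≠ 0 := (htor z).addOrderOf_pos.ne'
  set e := n.factorization p
  set m := n / p ^ e with hm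
  have hmdvd : m ∣ n := Nat.ordCompl_dvd n p
  have hpm : ¬ p ∣ m := Nat.not_dvd_ordCompl hp hn0
  have hco : Nat.Coprime (p ^ e) m := Nat.Coprime.pow_left e (Nat.coprime_ordCompl hp hn0)
  have hco' : IsCoprime ((p ^ e : ℕ) : ℤ) (m : ℤ) := Nat.isCoprime_iff_coprime.mpr hco
  obtain ⟨u, v, huv⟩ := hco'
  have hnz : (n : ℤ) • z = 0 := by
    rw [natCast_zsmul]; exact addOrderOf_nsmul_eq_zero z
  have hpe : (p ^ e * m : ℕ) = n := Nat.ordProj_mul_ordCompl_eq_self n p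
  refine ⟨(v * m) • z, m, ⟨e, ?_⟩, hpm, hmdvd, ?_⟩
  · rw [← natCast_zsmul, smul_smul]
    have : ((p ^ e : ℕ) : ℤ) * (v * (m : ℤ)) = v * ((n : ℕ) : ℤ) := by
      rw [← hpe]; push_cast; ring
    rw [this, mul_smul, hnz, smul_zero]
  · have hz : z - (v * (m:ℤ)) • z = (u * ((p ^ e : ℕ) : ℤ)) • z := by
      have h1 : z - (v * (m:ℤ)) • z = (1 - v * (m:ℤ)) • z := by
        rw [sub_smul, one_smul]
      have h2 : (1 - v * (m:ℤ)) = u * ((p ^ e : ℕ) : ℤ) := by linarith [huv]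
      rw [h1, h2]
    rw [← natCast_zsmul, hz, smul_smul]
    have : (m : ℤ) * (u * ((p ^ e : ℕ) : ℤ)) = u * ((n : ℕ) : ℤ) := by
      rw [← hpe]; push_cast; ring
    rw [this, mul_smul, hnz, smul_zero]

variable (htor : ∀ x : X, IsOfFinAddOrder x) {p : ℕ} (hp : p.Prime)

lemma smul_kill {a b : ℕ} {x : X} (h : a • x = 0) (h2 : a ∣ b) : b • x = 0 := by
  obtain ⟨c, rfl⟩ := h2; rw [mul_comm, mul_smul, h, smul_zero]

noncomputable def pPart (z : X) : X := Classical.choose (heyde_decomp htor p hp z)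

lemma pPart_spec (z : X) :
    (∃ k : ℕ, p ^ k • pPart htor hp z = 0) ∧
      ∃ m, ¬ p ∣ m ∧ m • (z - pPart htor hp z) = 0 := by
  obtain ⟨m, h1, h2, h3, h4⟩ := Classical.choose_spec (heyde_decomp htor p hp z)
  exact ⟨h1, m, h2, h4⟩

lemma pPart_unique {z a : X} (h1 : ∃ k : ℕ, p ^ k • a = 0)
    (h2 : ∃ m, ¬ p ∣ m ∧ m • (z - a) = 0) : pPart htor hp z = a := by
  obtain ⟨⟨k1, hk1⟩, m1, hm1, hm1'⟩ := pPart_spec htor hp z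
  obtain ⟨k, hk⟩ := h1
  obtain ⟨m, hm, hm'⟩ := h2
  have hd1 : p ^ (k + k1) • (pPart htor hp z - a) = 0 := by
    rw [smul_sub, smul_kill hk1 (pow_dvd_pow p (by omega)),
      smul_kill hk (pow_dvd_pow p (by omega)), sub_zero]
  have hd2 : (m * m1) • (pPart htor hp z - a) = 0 := by
    have h : pPart htor hp z - a = (z - a) - (z - pPart htor hp z) := by abel
    rw [h, smul_sub, smul_kill hm' ⟨m1, rfl⟩, smul_kill hm1' (dvd_mul_left m1 m), sub_zero]
  have := heyde_unique hp hd1 hd2 (fun h => (hp.dvd_mul.mp h).elim hm hm1)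
  rwa [sub_eq_zero] at this

lemma pPart_add (z w : X) :
    pPart htor hp (z + w) = pPart htor hp z + pPart htor hp w := by
  obtain ⟨⟨k1, hk1⟩, m1, hm1, hm1'⟩ := pPart_spec htor hp z
  obtain ⟨⟨k2, hk2⟩, m2, hm2, hm2'⟩ := pPart_spec htor hp w
  refine pPart_unique htor hp ⟨k1 + k2, ?_⟩ ⟨m1 * m2, fun h => (hp.dvd_mul.mp h).elim hm1 hm2, ?_⟩
  · rw [smul_add, smul_kill hk1 (pow_dvd_pow p (by omega)),
      smul_kill hk2 (pow_dvd_pow p (by omega)), add_zero]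
  · have h : z + w - (pPart htor hp z + pPart htor hp w)
        = (z - pPart htor hp z) + (w - pPart htor hp w) := by abel
    rw [h, smul_add, smul_kill hm1' ⟨m2, rfl⟩, smul_kill hm2' (dvd_mul_left m2 m1), add_zero]

lemma pPart_self {z : X} (hz : ∃ k : ℕ, p ^ k • z = 0) : pPart htor hp z = z :=
  pPart_unique htor hp hz ⟨1, fun h => hp.one_lt.ne' (Nat.dvd_one.mp h), by simp⟩

lemma pPart_zero : pPart htor hp (0 : X) = 0 :=
  pPart_self htor hp ⟨0, by simp⟩

lemma pPart_equiv (α : X ≃+ X) (z : X) :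
    pPart htor hp (α z) = α (pPart htor hp z) := by
  obtain ⟨⟨k1, hk1⟩, m1, hm1, hm1'⟩ := pPart_spec htor hp z
  refine pPart_unique htor hp ⟨k1, ?_⟩ ⟨m1, hm1, ?_⟩
  · rw [← map_nsmul, hk1, map_zero]
  · rw [← map_sub, ← map_nsmul, hm1', map_zero]

lemma pPart_mem_primary [Fact p.Prime] (z : X) :
    pPart htor hp z ∈ AddCommGroup.primaryComponent X p := by
  obtain ⟨⟨k, hk⟩, -⟩ := pPart_spec htor hp z
  have : addOrderOf (pPart htor hp z) ∣ p ^ k := addOrderOf_dvd_of_nsmul_eq_zero hk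
  obtain ⟨j, hj, hje⟩ := (Nat.dvd_prime_pow hp).mp this
  exact ⟨k, hk⟩

lemma zmod_endo_mul {N : ℕ} [NeZero N] (f : ZMod N →+ ZMod N) (s : ZMod N) : f s = s * f 1 := by
  have h : s = (s.val : ℕ) • (1 : ZMod N) := by
    rw [nsmul_eq_mul, mul_one, ZMod.natCast_rightInverse s]
  conv_lhs => rw [h]
  rw [map_nsmul, nsmul_eq_mul, ZMod.natCast_rightInverse s]

lemma mem_primary_smul {p : ℕ} [Fact p.Prime] {z : X}
    (hz : z ∈ AddCommGroup.primaryComponent X p) : ∃ k, p ^ k • z = 0 := by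
  obtain ⟨n, hn⟩ := hz
  exact ⟨n, hn⟩

end Aux

section Fixed
variable {X : Type*} [AddCommGroup X]

lemma exists_fixed_char (htor : ∀ x : X, IsOfFinAddOrder x)
    (hcyc : ∀ (p : ℕ) (hp : Fact p.Prime), IsAddCyclic (AddCommGroup.primaryComponent X p))
    {p : ℕ} [hpf : Fact p.Prime] (α : X ≃+ X) {x : X} (hx : x ≠ 0)
    (hxp : x ∈ AddCommGroup.primaryComponent X p) (hfix : α x = x) :
    ∃ y : AddChar X Circle, (∀ z, y (α z) = y z) ∧ y ≠ 1 := by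
  have hp : p.Prime := hpf.out
  haveI := hcyc p hpf
  obtain ⟨g, hg⟩ := IsAddCyclic.exists_generator (α := AddCommGroup.primaryComponent X p)
  set N := addOrderOf g with hN
  have hNne : N ≠ 0 := by
    have h1 : addOrderOf (g : X) ≠ 0 := (htor (g : X)).addOrderOf_pos.ne'
    rwa [AddSubgroup.addOrderOf_coe] at h1
  haveI : NeZero N := ⟨hNne⟩
  have hgN : (zmultiplesHom _ g) (N : ℤ) = 0 := by
    rw [zmultiplesHom_apply, natCast_zsmul]
    exact addOrderOf_nsmul_eq_zero g
  set ψ : ZMod N →+ AddCommGroup.primaryComponent X p :=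
    ZMod.lift N ⟨zmultiplesHom _ g, hgN⟩ with hψ
  have hψ_int : ∀ k : ℤ, ψ (k : ZMod N) = k • g := fun k => ZMod.lift_coe N _ k
  have hinj : Function.Injective ψ := by
    rw [injective_iff_map_eq_zero]
    intro c hc
    have h1 : ψ (((c.val : ℕ) : ℤ) : ZMod N) = 0 := by
      rwa [Int.cast_natCast, ZMod.natCast_rightInverse c]
    rw [hψ_int, natCast_zsmul] at h1
    have h2 : N ∣ c.val := addOrderOf_dvd_of_nsmul_eq_zero h1
    have h3 : c.val = 0 := Nat.eq_zero_of_dvd_of_lt h2 (ZMod.val_lt c)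
    have h4 := ZMod.natCast_rightInverse c
    rw [h3] at h4
    simpa using h4.symm
  have hsurj : Function.Surjective ψ := by
    intro s
    obtain ⟨k, hk⟩ := AddSubgroup.mem_zmultiples_iff.mp (hg s)
    exact ⟨(k : ZMod N), by rw [hψ_int, hk]⟩
  let e : ZMod N ≃+ AddCommGroup.primaryComponent X p := AddEquiv.ofBijective ψ ⟨hinj, hsurj⟩
  have hordα : ∀ z : X, addOrderOf (α z) = addOrderOf z := fun z =>
    addOrderOf_injective α.toAddMonoidHom α.injective z
  have hmemα : ∀ z : X, z ∈ AddCommGroup.primaryComponent X p →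
      α z ∈ AddCommGroup.primaryComponent X p := by
    rintro z ⟨n, hn⟩
    exact ⟨n, by rw [← map_nsmul, hn, map_zero]⟩
  have hmemα' : ∀ z : X, z ∈ AddCommGroup.primaryComponent X p →
      α.symm z ∈ AddCommGroup.primaryComponent X p := by
    rintro z ⟨n, hn⟩
    have h5 := hordα (α.symm z)
    rw [α.apply_symm_apply] at h5
    exact ⟨n, by rw [← map_nsmul, hn, map_zero]⟩
  let σ : AddCommGroup.primaryComponent X p ≃+ AddCommGroup.primaryComponent X p :=
    { toFun := fun s => ⟨α s, hmemα s s.2⟩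
      invFun := fun s => ⟨α.symm s, hmemα' s s.2⟩
      left_inv := fun s => by ext; simp
      right_inv := fun s => by ext; simp
      map_add' := fun s t => by ext; simp }
  let π : X →+ AddCommGroup.primaryComponent X p :=
    { toFun := fun z => ⟨pPart htor hp z, pPart_mem_primary htor hp z⟩
      map_zero' := Subtype.ext (pPart_zero htor hp)
      map_add' := fun a b => Subtype.ext (pPart_add htor hp a b) }
  let x' : ZMod N := e.symm ⟨x, hxp⟩
  have hx' : x' ≠ 0 := by
    intro h
    apply hx
    have h1 : (⟨x, hxp⟩ : AddCommGroup.primaryComponent X p) = e 0 := by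
      rw [← h, e.apply_symm_apply]
    rw [map_zero] at h1
    exact Subtype.ext_iff.mp h1
  let φ : ZMod N →+ ZMod N :=
    (e.symm.toAddMonoidHom.comp (σ.toAddMonoidHom.comp e.toAddMonoidHom))
  have hφ : ∀ s, φ s = s * φ 1 := fun s => zmod_endo_mul φ s
  have hfixS : σ ⟨x, hxp⟩ = ⟨x, hxp⟩ := Subtype.ext hfix
  have hx'u : x' * φ 1 = x' := by
    have h1 : φ x' = x' := by
      show e.symm (σ (e (e.symm ⟨x, hxp⟩))) = x'
      rw [e.apply_symm_apply, hfixS]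
    rw [← hφ x', h1]
  have key : ∀ w, e.symm (σ w) = e.symm w * φ 1 := by
    intro w
    have h1 := hφ (e.symm w)
    have h2 : φ (e.symm w) = e.symm (σ w) := by
      show e.symm (σ (e (e.symm w))) = e.symm (σ w)
      rw [e.apply_symm_apply]
    rw [h2] at h1
    exact h1
  have hπα : ∀ z, π (α z) = σ (π z) := fun z => Subtype.ext (pPart_equiv htor hp α z)
  refine ⟨{ toFun := fun z => ZMod.toCircle (x' * e.symm (π z))
            map_zero_eq_one' := by
              show ZMod.toCircle (x' * e.symm (π 0)) = 1
              rw [map_zero, map_zero, mul_zero, AddChar.map_zero_eq_one]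
            map_add_eq_mul' := fun a b => by
              show ZMod.toCircle (x' * e.symm (π (a + b)))
                  = ZMod.toCircle (x' * e.symm (π a)) * ZMod.toCircle (x' * e.symm (π b))
              rw [map_add, map_add, mul_add, AddChar.map_add_eq_mul] }, ?_, ?_⟩
  · intro z
    show ZMod.toCircle (x' * e.symm (π (α z))) = ZMod.toCircle (x' * e.symm (π z))
    rw [hπα, key]
    congr 1
    calc x' * (e.symm (π z) * φ 1) = (x' * φ 1) * e.symm (π z) := by ring
    _ = x' * e.symm (π z) := by rw [hx'u]
  · intro hone
    apply hx'
    have h1 : π ((e 1 : AddCommGroup.primaryComponent X p) : X) = e 1 := by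
      refine Subtype.ext ?_
      exact pPart_self htor hp (mem_primary_smul (e 1).2)
    have h2 := congrFun (congrArg (fun f : AddChar X Circle => (f : X → Circle)) hone)
      ((e 1 : AddCommGroup.primaryComponent X p) : X)
    simp only [AddChar.one_apply] at h2
    have h3 : ZMod.toCircle (x' * e.symm (π ((e 1 : AddCommGroup.primaryComponent X p) : X))) = 1 := h2
    rw [h1, e.symm_apply_apply, mul_one] at h3
    have h4 : ZMod.toCircle x' = ZMod.toCircle (0 : ZMod N) := by
      rw [h3, AddChar.map_zero_eq_one]
    exact ZMod.injective_toCircle h4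

end Fixed

open MeasureTheory in
lemma heyde_part1 {X : Type*} [AddCommGroup X] [MeasurableSpace X]
    (htor : ∀ x : X, IsOfFinAddOrder x)
    (h2 : ∀ x : X, x + x = 0 → x = 0)
    (α : X ≃+ X)
    (μ : Measure X) [IsProbabilityMeasure μ]
    (htriv : ∀ y : AddChar X Circle, ‖(∫ x, (y x : ℂ) ∂μ)‖ = 1 → y = 1)
    (heyde : ∀ u v : AddChar X Circle,
      (∫ x, ((u x * v x : Circle) : ℂ) ∂μ) *
        (∫ x, ((u x * v (α x) : Circle) : ℂ) ∂μ) =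
      (∫ x, ((u x * (v x)⁻¹ : Circle) : ℂ) ∂μ) *
        (∫ x, ((u x * (v (α x))⁻¹ : Circle) : ℂ) ∂μ)) :
    ∀ y : AddChar X Circle, (∀ x : X, y (α x) = y x) → y = 1 := by
  intro y hy
  have key := heyde y y
  have e1 : ∀ x : X, ((y x * (y x)⁻¹ : Circle) : ℂ) = 1 := by
    intro x; rw [mul_inv_cancel]; rfl
  have e2 : ∀ x : X, ((y x * (y (α x))⁻¹ : Circle) : ℂ) = 1 := by
    intro x; rw [hy x, mul_inv_cancel]; rfl
  have e3 : ∀ x : X, ((y x * y (α x) : Circle) : ℂ) = ((y x * y x : Circle) : ℂ) := by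
    intro x; rw [hy x]
  simp only [e1, e2, e3] at key
  rw [integral_const] at key
  simp only [probReal_univ, one_smul, mul_one] at key
  -- key : I * I = 1
  have hI : ‖(∫ x, ((y x * y x : Circle) : ℂ) ∂μ)‖ = 1 := by
    have h := congrArg (‖·‖) key
    rw [norm_mul, norm_one] at h
    rcases mul_self_eq_one_iff.mp h with h' | h'
    · exact h'
    · exfalso
      have := norm_nonneg (∫ x, ((y x * y x : Circle) : ℂ) ∂μ)
      rw [h'] at this; linarith
  have hyy : y * y = 1 := by
    apply htriv
    have : ∀ x : X, (((y * y) x : Circle) : ℂ) = ((y x * y x : Circle) : ℂ) := by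
      intro x; rw [AddChar.mul_apply]
    rw [show (∫ x, (((y * y) x : Circle) : ℂ) ∂μ) = ∫ x, ((y x * y x : Circle) : ℂ) ∂μ from by
      simp only [this]]
    exact hI
  have hsq : ∀ x : X, y x * y x = 1 := by
    intro x
    have := congrArg (fun f : AddChar X Circle => f x) hyy
    simpa [AddChar.mul_apply, AddChar.one_apply] using this
  refine DFunLike.ext y 1 fun x => ?_
  rw [AddChar.one_apply]
  have hn0 : addOrderOf x ≠ 0 := (htor x).addOrderOf_pos.ne'
  have hodd : ¬ (2 ∣ addOrderOf x) := by
    intro hdvd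
    have hhalf : (addOrderOf x / 2) • x + (addOrderOf x / 2) • x = 0 := by
      rw [← add_nsmul]
      have h : addOrderOf x / 2 + addOrderOf x / 2 = addOrderOf x := by omega
      rw [h]; exact addOrderOf_nsmul_eq_zero x
    have hz := h2 _ hhalf
    have hdvd2 : addOrderOf x ∣ addOrderOf x / 2 := addOrderOf_dvd_of_nsmul_eq_zero hz
    have h1 : addOrderOf x / 2 ≠ 0 := by omega
    have := Nat.le_of_dvd (Nat.pos_of_ne_zero h1) hdvd2
    omega
  have hco : IsCoprime (2 : ℤ) ((addOrderOf x : ℕ) : ℤ) := by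
    rw [Int.isCoprime_iff_gcd_eq_one]
    have : Nat.Coprime 2 (addOrderOf x) :=
      (Nat.Prime.coprime_iff_not_dvd Nat.prime_two).mpr hodd
    simpa [Int.gcd] using this
  obtain ⟨a, b, hab⟩ := hco
  have hpow2 : (y x) ^ (2 : ℤ) = 1 := by
    rw [show (2:ℤ) = ((2:ℕ):ℤ) from rfl, zpow_natCast, pow_two, hsq x]
  have hpown : (y x) ^ ((addOrderOf x : ℕ) : ℤ) = 1 := by
    rw [zpow_natCast, ← AddChar.map_nsmul_eq_pow, addOrderOf_nsmul_eq_zero,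
      AddChar.map_zero_eq_one]
  calc y x = (y x) ^ (a * 2 + b * ((addOrderOf x : ℕ) : ℤ)) := by rw [hab, zpow_one]
  _ = ((y x) ^ (2 : ℤ)) ^ a * ((y x) ^ ((addOrderOf x : ℕ) : ℤ)) ^ b := by
      rw [zpow_add, mul_comm a 2, mul_comm b _, zpow_mul, zpow_mul]
  _ = 1 := by rw [hpow2, hpown, one_zpow, one_zpow, one_mul]

section Part2
variable {X : Type*} [AddCommGroup X]

def pcompSub (X : Type*) [AddCommGroup X] (p : ℕ) : AddSubgroup X where
  carrier := {x | ∃ k : ℕ, p ^ k • x = 0}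
  zero_mem' := ⟨0, smul_zero _⟩
  add_mem' := by
    rintro a b ⟨k, hk⟩ ⟨l, hl⟩
    exact ⟨k + l, by
      rw [smul_add, smul_kill hk (pow_dvd_pow p (by omega)),
        smul_kill hl (pow_dvd_pow p (by omega)), add_zero]⟩
  neg_mem' := by
    rintro a ⟨k, hk⟩
    exact ⟨k, by rw [smul_neg, hk, neg_zero]⟩

lemma mem_pcompSub {p : ℕ} {x : X} : x ∈ pcompSub X p ↔ ∃ k : ℕ, p ^ k • x = 0 := Iff.rfl

lemma pcompSub_le_primary {p : ℕ} (hp : p.Prime) [Fact p.Prime] :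
    pcompSub X p ≤ AddCommGroup.primaryComponent X p := by
  rintro z ⟨k, hk⟩
  have h : addOrderOf z ∣ p ^ k := addOrderOf_dvd_of_nsmul_eq_zero hk
  obtain ⟨j, hj, hje⟩ := (Nat.dvd_prime_pow hp).mp h
  exact ⟨k, hk⟩

lemma heyde_inj (htor : ∀ x : X, IsOfFinAddOrder x)
    (hcyc : ∀ (p : ℕ) (hp : Fact p.Prime), IsAddCyclic (AddCommGroup.primaryComponent X p))
    (α : X ≃+ X)
    (hK : ∀ y : AddChar X Circle, (∀ x, y (α x) = y x) → y = 1) :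
    Function.Injective (fun x : X => x - α x) := by
  have hker : ∀ x : X, α x = x → x = 0 := by
    intro x hfix
    by_contra hx
    have hn0 : addOrderOf x ≠ 0 := (htor x).addOrderOf_pos.ne'
    have hn1 : addOrderOf x ≠ 1 := fun h => hx (AddMonoid.addOrderOf_eq_one_iff.mp h)
    have hp : (addOrderOf x).minFac.Prime := Nat.minFac_prime hn1
    haveI : Fact (addOrderOf x).minFac.Prime := ⟨hp⟩
    have hd : (addOrderOf x).minFac ∣ addOrderOf x := Nat.minFac_dvd _
    obtain ⟨c, hc⟩ := hd
    have hpx : (addOrderOf x).minFac • (c • x) = 0 := by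
      rw [← mul_smul, ← hc]
      exact addOrderOf_nsmul_eq_zero x
    have hx₁ : c • x ≠ 0 := by
      intro h
      have hdvd : addOrderOf x ∣ c := addOrderOf_dvd_of_nsmul_eq_zero h
      have hc0 : c ≠ 0 := by rintro rfl; rw [mul_zero] at hc; exact hn0 hc
      have h1 := Nat.le_of_dvd (Nat.pos_of_ne_zero hc0) hdvd
      have h2 : c < addOrderOf x := by
        rw [hc]
        calc c = 1 * c := (one_mul c).symm
        _ < (addOrderOf x).minFac * c := by
            exact (Nat.mul_lt_mul_right (Nat.pos_of_ne_zero hc0)).mpr hp.one_lt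
      omega
    have hmem : c • x ∈ AddCommGroup.primaryComponent X (addOrderOf x).minFac := by
      have hdvd : addOrderOf (c • x) ∣ (addOrderOf x).minFac :=
        addOrderOf_dvd_of_nsmul_eq_zero hpx
      rcases (Nat.dvd_prime hp).mp hdvd with h | h
      · exact absurd (AddMonoid.addOrderOf_eq_one_iff.mp h) hx₁
      · exact ⟨1, by rw [pow_one]; exact hpx⟩
    have hfix₁ : α (c • x) = c • x := by rw [map_nsmul, hfix]
    obtain ⟨y, hy1, hy2⟩ := exists_fixed_char htor hcyc α hx₁ hmem hfix₁
    exact hy2 (hK y hy1)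
  intro a b hab
  simp only at hab
  have h3 : (a - b) - (α a - α b) = (a - α a) - (b - α b) := by abel
  rw [hab, sub_self] at h3
  have h4 : α (a - b) = a - b := by
    rw [map_sub]
    exact (sub_eq_zero.mp h3).symm
  have := hker _ h4
  exact sub_eq_zero.mp this

lemma mem_biSup_pcomp (htor : ∀ x : X, IsOfFinAddOrder x) (z : X) :
    z ∈ ⨆ p ∈ (addOrderOf z).primeFactors, pcompSub X p := by
  suffices H : ∀ n : ℕ, ∀ z : X, addOrderOf z = n → z ∈ ⨆ p ∈ n.primeFactors, pcompSub X p from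
    H _ z rfl
  intro n
  induction n using Nat.strong_induction_on with
  | _ n ih =>
    intro z hz
    have hn0 : n ≠ 0 := hz ▸ (htor z).addOrderOf_pos.ne'
    rcases eq_or_ne n 1 with rfl | hn1
    · have : z = 0 := AddMonoid.addOrderOf_eq_one_iff.mp hz
      rw [this]; exact zero_mem _
    have hp : n.minFac.Prime := Nat.minFac_prime hn1
    obtain ⟨a, m, ⟨k, hk⟩, hpm, hmdvd, hmz⟩ := heyde_decomp htor n.minFac hp z
    rw [hz] at hmdvd
    have hmem : n.minFac ∈ n.primeFactors :=
      Nat.mem_primeFactors.mpr ⟨hp, Nat.minFac_dvd n, hn0⟩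
    have hasup : a ∈ ⨆ p ∈ n.primeFactors, pcompSub X p :=
      le_iSup₂ (f := fun p (_ : p ∈ n.primeFactors) => pcompSub X p) n.minFac hmem ⟨k, hk⟩
    have hm0 : m ≠ 0 := by rintro rfl; exact hpm (dvd_zero _)
    have hmn : m < n := by
      have h1 := Nat.le_of_dvd (Nat.pos_of_ne_zero hn0) hmdvd
      rcases lt_or_eq_of_le h1 with h | h
      · exact h
      · exact absurd (h ▸ Nat.minFac_dvd n) hpm
    have hbord : addOrderOf (z - a) ∣ m := addOrderOf_dvd_of_nsmul_eq_zero hmz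
    have hblt : addOrderOf (z - a) < n :=
      lt_of_le_of_lt (Nat.le_of_dvd (Nat.pos_of_ne_zero hm0) hbord) hmn
    have hbmem := ih _ hblt (z - a) rfl
    have hsub : (addOrderOf (z - a)).primeFactors ⊆ n.primeFactors :=
      Nat.primeFactors_mono (dvd_trans hbord hmdvd) hn0
    have hble : (⨆ q ∈ (addOrderOf (z - a)).primeFactors, pcompSub X q)
        ≤ ⨆ q ∈ n.primeFactors, pcompSub X q := biSup_mono (fun q hq => hsub hq)
    have hzeq : z = a + (z - a) := by abel
    rw [hzeq]
    exact add_mem hasup (hble hbmem)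

lemma finite_biSup {s : Finset ℕ} {f : ℕ → AddSubgroup X}
    (hf : ∀ p ∈ s, ((f p : Set X)).Finite) :
    (((⨆ p ∈ s, f p : AddSubgroup X) : Set X)).Finite := by
  classical
  induction s using Finset.induction_on with
  | empty =>
    rw [show (⨆ p ∈ (∅ : Finset ℕ), f p) = ⊥ by simp]
    rw [AddSubgroup.coe_bot]
    exact Set.finite_singleton 0
  | @insert a s ha ih =>
    rw [Finset.iSup_insert]
    have h1 := hf a (Finset.mem_insert_self a s)
    have h2 := ih (fun p hp => hf p (Finset.mem_insert_of_mem hp))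
    apply Set.Finite.subset (Set.Finite.image2 (· + ·) h1 h2)
    intro x hx
    obtain ⟨y, hy, w, hw, rfl⟩ := AddSubgroup.mem_sup.mp hx
    exact Set.mem_image2_of_mem hy hw

lemma pcomp_finite (htor : ∀ x : X, IsOfFinAddOrder x)
    (hcyc : ∀ (p : ℕ) (hp : Fact p.Prime), IsAddCyclic (AddCommGroup.primaryComponent X p))
    {p : ℕ} (hp : p.Prime) : ((pcompSub X p : AddSubgroup X) : Set X).Finite := by
  haveI : Fact p.Prime := ⟨hp⟩
  haveI := hcyc p ⟨hp⟩
  obtain ⟨g, hg⟩ := IsAddCyclic.exists_generator (α := AddCommGroup.primaryComponent X p)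
  apply Set.Finite.subset ((htor (g : X)).finite_zmultiples)
  intro w hw
  obtain ⟨kk, hkk⟩ := AddSubgroup.mem_zmultiples_iff.mp (hg ⟨w, pcompSub_le_primary hp hw⟩)
  have : kk • (g : X) = w := congrArg Subtype.val hkk
  exact AddSubgroup.mem_zmultiples_iff.mpr ⟨kk, this⟩

lemma heyde_surj (htor : ∀ x : X, IsOfFinAddOrder x)
    (hcyc : ∀ (p : ℕ) (hp : Fact p.Prime), IsAddCyclic (AddCommGroup.primaryComponent X p))
    (α : X ≃+ X)
    (hinj : Function.Injective (fun x : X => x - α x)) :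
    Function.Surjective (fun x : X => x - α x) := by
  intro z
  set H : AddSubgroup X := ⨆ p ∈ (addOrderOf z).primeFactors, pcompSub X p with hH
  have hzH : z ∈ H := mem_biSup_pcomp htor z
  have hαH : ∀ w ∈ H, α w ∈ H := by
    have hle : H ≤ AddSubgroup.comap α.toAddMonoidHom H := by
      rw [hH]
      apply iSup₂_le
      intro p hp w hw
      obtain ⟨k, hk⟩ := hw
      have : α w ∈ pcompSub X p := ⟨k, by rw [← map_nsmul, hk, map_zero]⟩
      exact le_iSup₂ (f := fun p (_ : p ∈ (addOrderOf z).primeFactors) => pcompSub X p) p hp this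
    exact fun w hw => hle hw
  have hfin : (H : Set X).Finite :=
    finite_biSup (fun p hp => pcomp_finite htor hcyc (Nat.prime_of_mem_primeFactors hp))
  haveI : Finite H := hfin.to_subtype
  let β : H → H := fun w => ⟨(w : X) - α w, sub_mem w.2 (hαH w w.2)⟩
  have hβinj : Function.Injective β := by
    intro a b h
    have h1 : (a : X) - α a = (b : X) - α b := congrArg Subtype.val h
    exact Subtype.ext (hinj h1)
  have hβsurj : Function.Surjective β := Finite.surjective_of_injective hβinj
  obtain ⟨w, hw⟩ := hβsurj ⟨z, hzH⟩
  exact ⟨w, congrArg Subtype.val hw⟩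

end Part2

/-- If `μ` on a discrete torsion abelian group with cyclic `p`-components and no 2-torsion
has `{y : |μ̂(y)| = 1} = {0}` and its characteristic function satisfies the Heyde equation,
then `Ker(I − α̃)` is trivial and `I − α` is an automorphism of `X`. -/
theorem stmt_19 {X : Type*} [AddCommGroup X] [MeasurableSpace X] [DiscreteMeasurableSpace X]
    (htor : ∀ x : X, IsOfFinAddOrder x)
    (hcyc : ∀ (p : ℕ) (hp : Fact p.Prime), IsAddCyclic (AddCommGroup.primaryComponent X p))
    (h2 : ∀ x : X, x + x = 0 → x = 0)
    (α : X ≃+ X)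
    (μ : Measure X) [IsProbabilityMeasure μ]
    (htriv : ∀ y : AddChar X Circle, ‖(∫ x, (y x : ℂ) ∂μ)‖ = 1 → y = 1)
    (heyde : ∀ u v : AddChar X Circle,
      (∫ x, ((u x * v x : Circle) : ℂ) ∂μ) *
        (∫ x, ((u x * v (α x) : Circle) : ℂ) ∂μ) =
      (∫ x, ((u x * (v x)⁻¹ : Circle) : ℂ) ∂μ) *
        (∫ x, ((u x * (v (α x))⁻¹ : Circle) : ℂ) ∂μ)) :
    (∀ y : AddChar X Circle, (∀ x : X, y (α x) = y x) → y = 1) ∧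
      Function.Bijective (fun x : X => x - α x) := by
  have hK := heyde_part1 htor h2 α μ htriv heyde
  have hinj := heyde_inj htor hcyc α hK
  exact ⟨hK, hinj, heyde_surj htor hcyc α hinj⟩
end
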